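/- The function f(x) = (1 − e^x)·(x − ln(1 − e^x)) is concave on the interval [−ln 2, 0). -/

import Mathlib

open Real Set

lemma hasDerivAt_f_aux {x : ℝ} (hx : x < 0) :
    HasDerivAt (fun x : ℝ => (1 - Real.exp x) * (x - Real.log (1 - Real.exp x)))
      (1 - Real.exp x * (x - Real.log (1 - Real.exp x))) x := by
  have hpos : 0 < 1 - Real.exp x := by
    have := Real.exp_lt_one_iff.2 hx; linarith
  have h1 : HasDerivAt (fun x : ℝ => 1 - Real.exp x) (-Real.exp x) x := by
    simpa using (Real.hasDerivAt_exp x).const_sub 1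
  have h2 : HasDerivAt (fun x : ℝ => Real.log (1 - Real.exp x))
      (-Real.exp x / (1 - Real.exp x)) x := h1.log hpos.ne'
  have h3 : HasDerivAt (fun x : ℝ => x - Real.log (1 - Real.exp x))
      (1 - -Real.exp x / (1 - Real.exp x)) x := (hasDerivAt_id x).sub h2
  have := h1.fun_mul h3
  refine this.congr_deriv ?_
  field_simp [hpos.ne']
  ring

lemma hasDerivAt_f'_aux {x : ℝ} (hx : x < 0) :
    HasDerivAt (fun x : ℝ => 1 - Real.exp x * (x - Real.log (1 - Real.exp x)))
      (-(Real.exp x * (x - Real.log (1 - Real.exp x)) + Real.exp x / (1 - Real.exp x))) x := by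
  have hpos : 0 < 1 - Real.exp x := by
    have := Real.exp_lt_one_iff.2 hx; linarith
  have h1 : HasDerivAt (fun x : ℝ => 1 - Real.exp x) (-Real.exp x) x := by
    simpa using (Real.hasDerivAt_exp x).const_sub 1
  have h2 : HasDerivAt (fun x : ℝ => Real.log (1 - Real.exp x))
      (-Real.exp x / (1 - Real.exp x)) x := h1.log hpos.ne'
  have h3 : HasDerivAt (fun x : ℝ => x - Real.log (1 - Real.exp x))
      (1 - -Real.exp x / (1 - Real.exp x)) x := (hasDerivAt_id x).sub h2
  have h4 := ((Real.hasDerivAt_exp x).fun_mul h3).const_sub 1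
  refine h4.congr_deriv ?_
  field_simp [hpos.ne']
  ring

/-- `f(x) = (1 − e^x)(x − ln(1 − e^x))` is concave on `[−ln 2, 0)`. -/
theorem concave_potential_aux :
    ConcaveOn ℝ (Set.Ico (-Real.log 2) 0)
      (fun x : ℝ => (1 - Real.exp x) * (x - Real.log (1 - Real.exp x))) := by
  have hint : interior (Set.Ico (-Real.log 2) 0) = Set.Ioo (-Real.log 2) 0 :=
    interior_Ico
  refine concaveOn_of_hasDerivWithinAt2_nonpos (f' := fun x =>
      1 - Real.exp x * (x - Real.log (1 - Real.exp x)))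
    (f'' := fun x => -(Real.exp x * (x - Real.log (1 - Real.exp x)) +
      Real.exp x / (1 - Real.exp x)))
    (convex_Ico _ _) ?_ ?_ ?_ ?_
  · -- continuity
    have : ∀ x ∈ Set.Ico (-Real.log 2) (0:ℝ), (0:ℝ) < 1 - Real.exp x := by
      intro x hx
      have := Real.exp_lt_one_iff.2 hx.2
      linarith
    apply ContinuousOn.mul
    · exact (continuousOn_const.sub (Real.continuous_exp.continuousOn))
    · exact continuousOn_id.sub (((continuousOn_const.sub
        Real.continuous_exp.continuousOn).log (fun x hx => (this x hx).ne')))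
  · intro x hx
    rw [hint] at hx
    exact (hasDerivAt_f_aux hx.2).hasDerivWithinAt
  · intro x hx
    rw [hint] at hx
    exact (hasDerivAt_f'_aux hx.2).hasDerivWithinAt
  · intro x hx
    rw [hint] at hx
    obtain ⟨h1, h2⟩ := hx
    have hexp : Real.exp x < 1 := Real.exp_lt_one_iff.2 h2
    have hpos : 0 < 1 - Real.exp x := by linarith
    have hhalf : Real.exp x > 1/2 := by
      have := Real.exp_lt_exp.2 h1
      rw [Real.exp_neg, Real.exp_log (by norm_num : (0:ℝ) < 2)] at this
      linarith [this]
    have hlog : Real.log (1 - Real.exp x) ≤ x := by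
      have h5 : 1 - Real.exp x < 1/2 := by linarith
      have := Real.log_lt_log hpos h5
      have hlog2 : Real.log (1/2 : ℝ) = -Real.log 2 := by
        rw [Real.log_div one_ne_zero (by norm_num), Real.log_one]; ring
      nlinarith [this, hlog2, h1]
    have t1 : 0 ≤ Real.exp x * (x - Real.log (1 - Real.exp x)) :=
      mul_nonneg (Real.exp_pos x).le (by linarith)
    have t2 : 0 < Real.exp x / (1 - Real.exp x) := div_pos (Real.exp_pos x) hpos
    linarith
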